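/- arXiv:1807.04245 — 2 statements merged into one kernel-verified Lean document; each statement's English description precedes it below -/
import Mathlib

section
/- Let ρ > 0, d ∈ R, and n, n' ∈ R^m with n^T n' < d. If (y, ω) is a local minimizer of (ρ/2)‖y − n‖₂² + (ρ/2)‖ω − n'‖₂² subject to y^T ω ≥ d, then the constraint is active: y^T ω = d. -/
open Matrix

/-- When the input violates the bilinear constraint (`nᵀn' < d`), any local
minimizer of the bilinear proximal problem lies on the boundary: `yᵀω = d`. -/
theorem prox_bilinear_constraint_active
    {m : ℕ} (ρ d : ℝ) (hρ : 0 < ρ) (n n' : Fin m → ℝ)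
    (h : n ⬝ᵥ n' < d) (y ω : Fin m → ℝ)
    (hfeas : d ≤ y ⬝ᵥ ω)
    (hloc : ∃ ε > (0 : ℝ), ∀ y' ω' : Fin m → ℝ, d ≤ y' ⬝ᵥ ω' →
      (∑ i, (y' i - y i) ^ 2) + (∑ i, (ω' i - ω i) ^ 2) < ε →
      ρ / 2 * (∑ i, (y i - n i) ^ 2) + ρ / 2 * (∑ i, (ω i - n' i) ^ 2) ≤
        ρ / 2 * (∑ i, (y' i - n i) ^ 2) + ρ / 2 * (∑ i, (ω' i - n' i) ^ 2)) :
    y ⬝ᵥ ω = d := by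
  by_contra hne
  have hlt : d < y ⬝ᵥ ω := lt_of_le_of_ne hfeas (Ne.symm hne)
  obtain ⟨ε, hε, H⟩ := hloc
  set S1 : ℝ := ∑ i, (y i - n i) ^ 2 with hS1
  set S2 : ℝ := ∑ i, (ω i - n' i) ^ 2 with hS2
  have hS1nn : 0 ≤ S1 := Finset.sum_nonneg fun i _ => sq_nonneg _
  have hS2nn : 0 ≤ S2 := Finset.sum_nonneg fun i _ => sq_nonneg _
  have hSpos : 0 < S1 + S2 := by
    rcases lt_or_eq_of_le (by positivity : (0:ℝ) ≤ S1 + S2) with hp | hp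
    · exact hp
    · exfalso
      have h1 : S1 = 0 := by nlinarith
      have h2 : S2 = 0 := by nlinarith
      have hy : ∀ i, y i = n i := by
        intro i
        nlinarith [(Finset.sum_eq_zero_iff_of_nonneg
          (fun i (_ : i ∈ Finset.univ) => sq_nonneg (y i - n i))).mp h1 i (Finset.mem_univ i)]
      have hw : ∀ i, ω i = n' i := by
        intro i
        nlinarith [(Finset.sum_eq_zero_iff_of_nonneg
          (fun i (_ : i ∈ Finset.univ) => sq_nonneg (ω i - n' i))).mp h2 i (Finset.mem_univ i)]
      have : y ⬝ᵥ ω = n ⬝ᵥ n' := by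
        simp only [dotProduct]
        exact Finset.sum_congr rfl fun i _ => by rw [hy i, hw i]
      linarith
  -- continuity of the constraint along the segment toward (n, n')
  have hF : Continuous fun t : ℝ =>
      ∑ i, (y i + t * (n i - y i)) * (ω i + t * (n' i - ω i)) := by
    apply continuous_finset_sum
    intro i _
    fun_prop
  have hF0 : (∑ i, (y i + (0:ℝ) * (n i - y i)) * (ω i + (0:ℝ) * (n' i - ω i)))
      = y ⬝ᵥ ω := by simp [dotProduct]
  have hev1 : ∀ᶠ t : ℝ in nhds 0,
      d < ∑ i, (y i + t * (n i - y i)) * (ω i + t * (n' i - ω i)) := by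
    have : Filter.Tendsto (fun t : ℝ =>
        ∑ i, (y i + t * (n i - y i)) * (ω i + t * (n' i - ω i))) (nhds 0)
        (nhds (y ⬝ᵥ ω)) := by
      simpa [hF0, dotProduct] using hF.tendsto 0
    exact this.eventually_const_lt hlt
  set C : ℝ := (∑ i, (n i - y i) ^ 2) + (∑ i, (n' i - ω i) ^ 2) with hC
  have hev2 : ∀ᶠ t : ℝ in nhds 0, t ^ 2 * C < ε := by
    have hcont : Continuous fun t : ℝ => t ^ 2 * C := by fun_prop
    have : Filter.Tendsto (fun t : ℝ => t ^ 2 * C) (nhds 0) (nhds 0) := by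
      simpa using hcont.tendsto 0
    exact this.eventually_lt_const hε
  have hev3' : ∀ᶠ t : ℝ in nhds 0, t < 1 := by
    have : Set.Iio (1:ℝ) ∈ nhds (0:ℝ) := Iio_mem_nhds one_pos
    exact this
  have hevpos : ∀ᶠ t : ℝ in nhdsWithin 0 (Set.Ioi 0), 0 < t :=
    self_mem_nhdsWithin
  have hcomb : ∀ᶠ t : ℝ in nhdsWithin 0 (Set.Ioi 0),
      (d < ∑ i, (y i + t * (n i - y i)) * (ω i + t * (n' i - ω i))) ∧
      t ^ 2 * C < ε ∧ t < 1 ∧ 0 < t := by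
    filter_upwards [hev1.filter_mono nhdsWithin_le_nhds,
      hev2.filter_mono nhdsWithin_le_nhds, hev3'.filter_mono nhdsWithin_le_nhds,
      hevpos] with t h1 h2 h3 h4
    exact ⟨h1, h2, h3, h4⟩
  obtain ⟨t, hd, hεt, ht1, ht0⟩ := hcomb.exists
  set y' : Fin m → ℝ := fun i => y i + t * (n i - y i) with hy'
  set ω' : Fin m → ℝ := fun i => ω i + t * (n' i - ω i) with hω'
  have hfeas' : d ≤ y' ⬝ᵥ ω' := le_of_lt (by simpa [dotProduct, hy', hω'] using hd)
  have hdist : (∑ i, (y' i - y i) ^ 2) + (∑ i, (ω' i - ω i) ^ 2) < ε := by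
    have e1 : (∑ i, (y' i - y i) ^ 2) = t ^ 2 * ∑ i, (n i - y i) ^ 2 := by
      rw [Finset.mul_sum]
      exact Finset.sum_congr rfl fun i _ => by simp [hy']; ring
    have e2 : (∑ i, (ω' i - ω i) ^ 2) = t ^ 2 * ∑ i, (n' i - ω i) ^ 2 := by
      rw [Finset.mul_sum]
      exact Finset.sum_congr rfl fun i _ => by simp [hω']; ring
    rw [e1, e2]
    calc t ^ 2 * ∑ i, (n i - y i) ^ 2 + t ^ 2 * ∑ i, (n' i - ω i) ^ 2
        = t ^ 2 * C := by rw [hC]; ring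
      _ < ε := hεt
  have hkey := H y' ω' hfeas' hdist
  have e3 : (∑ i, (y' i - n i) ^ 2) = (1 - t) ^ 2 * S1 := by
    rw [hS1, Finset.mul_sum]
    exact Finset.sum_congr rfl fun i _ => by simp [hy']; ring
  have e4 : (∑ i, (ω' i - n' i) ^ 2) = (1 - t) ^ 2 * S2 := by
    rw [hS2, Finset.mul_sum]
    exact Finset.sum_congr rfl fun i _ => by simp [hω']; ring
  rw [e3, e4] at hkey
  have hsq : (1 - t) ^ 2 < 1 := by nlinarith
  nlinarith [mul_pos hρ hSpos]
end

section
/- Let n, n' ∈ R^m, d ∈ R, and x ∈ R with x² ≠ 1. Define y = (n − x n')/(1 − x²) and ω = (n' − x n)/(1 − x²). Then y^T ω = d if and only if x satisfies the quartic equation d x⁴ + (−2d − n^T n') x² + (n^T n + n'^T n') x + (d − n^T n') = 0. -/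
open Matrix

/-- The active-constraint condition `yᵀω = d` for the closed-form stationary
points of the bilinear proximal operator is equivalent to a quartic equation
in `x = λ/ρ`. -/
theorem prox_bilinear_quartic
    {m : ℕ} (d x : ℝ) (hx : x ^ 2 ≠ 1) (n n' : Fin m → ℝ)
    (y ω : Fin m → ℝ)
    (hy : y = fun i => (n i - x * n' i) / (1 - x ^ 2))
    (hω : ω = fun i => (n' i - x * n i) / (1 - x ^ 2)) :
    y ⬝ᵥ ω = d ↔
      d * x ^ 4 + (-2 * d - n ⬝ᵥ n') * x ^ 2 +
        (n ⬝ᵥ n + n' ⬝ᵥ n') * x + (d - n ⬝ᵥ n') = 0 := by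
  have h1 : (1 - x ^ 2) ≠ 0 := by
    intro h; apply hx; linarith
  have hterm : ∀ i, y i * ω i =
      ((1 + x ^ 2) * (n i * n' i) - x * (n i * n i) - x * (n' i * n' i)) /
        (1 - x ^ 2) ^ 2 := by
    intro i
    rw [hy, hω]
    field_simp
    ring
  have key : y ⬝ᵥ ω =
      ((1 + x ^ 2) * (n ⬝ᵥ n') - x * (n ⬝ᵥ n) - x * (n' ⬝ᵥ n')) /
        (1 - x ^ 2) ^ 2 := by
    simp only [dotProduct, hterm, ← Finset.sum_div]
    congr 1
    simp [Finset.sum_sub_distrib, Finset.mul_sum]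
  rw [key, div_eq_iff (pow_ne_zero 2 h1)]
  constructor
  · intro h; linear_combination -h
  · intro h; linear_combination -h
end
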